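/- Let s = (s₁,s₂,s₃) ∈ ℝ³ with s₁,s₂,s₃ > 0. Then the following are equivalent: (i) p_r(s) ≥ 0 for all r = 1,2,3; (ii) there exists a = (a₁,a₂,a₃) ∈ ℝ³ such that the 3×3 symmetric matrix M₆(s,a) is positive semidefinite, s_{r+1} + s_{r+2} - s_r + a_r ≥ 0 for all r, and a_r ≤ a_r⁰(s) for all r. (This is the matrix-level statement that g_s on W⁶ has strongly nonnegative curvature if and only if it has sec ≥ 0.) -/

import Mathlib

set_option maxHeartbeats 1000000

open Matrix

/-- `S(s) = 2(s₁s₂+s₁s₃+s₂s₃) - (s₁²+s₂²+s₃²)`. -/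
noncomputable def Spoly (s : Fin 3 → ℝ) : ℝ :=
  2 * (s 0 * s 1 + s 0 * s 2 + s 1 * s 2) - (s 0 ^ 2 + s 1 ^ 2 + s 2 ^ 2)

/-- `p_r(s) = (s_{r+1}-s_{r+2})² + 2 s_r (s_{r+1}+s_{r+2}) - 3 s_r²`, indices mod 3. -/
noncomputable def ppoly (s : Fin 3 → ℝ) (r : Fin 3) : ℝ :=
  (s (r + 1) - s (r + 2)) ^ 2 + 2 * s r * (s (r + 1) + s (r + 2)) - 3 * s r ^ 2

/-- `a_r⁰(s) = ((s_{r+1}-s_{r+2})² - s_r²)/(2 s_r)`, indices mod 3. -/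
noncomputable def a0 (s : Fin 3 → ℝ) (r : Fin 3) : ℝ :=
  ((s (r + 1) - s (r + 2)) ^ 2 - s r ^ 2) / (2 * s r)

/-- First block of the modified curvature operator of `(W⁶, g_s)`. -/
noncomputable def M6 (s a : Fin 3 → ℝ) : Matrix (Fin 3) (Fin 3) ℝ :=
  !![4 * s 0,                         -Spoly s / (2 * s 2) + a 2,  -Spoly s / (2 * s 1) + a 1;
     -Spoly s / (2 * s 2) + a 2,      4 * s 1,                     -Spoly s / (2 * s 0) + a 0;
     -Spoly s / (2 * s 1) + a 1,      -Spoly s / (2 * s 0) + a 0,  4 * s 2]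

private lemma div_e_nonneg {E c H : ℝ} (hc : 0 < c) (hH : 0 ≤ H) (key : E * c = H) :
    0 ≤ E := by nlinarith

private lemma tri (x y z : ℝ) (hy : 0 < y) (hz : 0 < z)
    (hp : 0 ≤ (y - z)^2 + 2*x*(y + z) - 3*x^2) : 0 ≤ y + z - x := by
  nlinarith [mul_pos hy hz, sq_nonneg (y - z)]

private lemma bothCert (x y z : ℝ)
    (hp0 : 0 ≤ (y - z)^2 + 2*x*(y + z) - 3*x^2)
    (hp1 : 0 ≤ (z - x)^2 + 2*y*(z + x) - 3*y^2)
    (hp2 : 0 ≤ (x - y)^2 + 2*z*(x + y) - 3*z^2) :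
    0 ≤ 4*x*y*z*(y + z) + y*(z + x)*((x - y)^2 - z*(x + y))
        + z*(x + y)*((z - x)^2 - y*(z + x)) := by
  linarith [mul_nonneg hp0 (sq_nonneg (x - y)), mul_nonneg hp0 (sq_nonneg (x - z)),
    mul_nonneg hp0 (sq_nonneg (y - z)), mul_nonneg hp1 (sq_nonneg (x - y)),
    mul_nonneg hp1 (sq_nonneg (x - z)), mul_nonneg hp1 (sq_nonneg (y - z)),
    mul_nonneg hp2 (sq_nonneg (x - y)), mul_nonneg hp2 (sq_nonneg (x - z)),
    mul_nonneg hp2 (sq_nonneg (y - z))]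

private lemma singleCert (x y z : ℝ) (hx : 0 < x) (hy : 0 < y) (hz : 0 < z)
    (hp0 : 0 ≤ (y - z)^2 + 2*x*(y + z) - 3*x^2)
    (hp1 : 0 ≤ (z - x)^2 + 2*y*(z + x) - 3*y^2)
    (hp2 : 0 ≤ (x - y)^2 + 2*z*(x + y) - 3*z^2) :
    0 ≤ 4*x*z*(y + z) + (z + x)*((x - y)^2 - z*(x + y)) := by
  have hq0 : 0 ≤ y + z - x := tri x y z hy hz hp0
  have hq1 : 0 ≤ z + x - y := tri y z x hz hx (by linarith [hp1])
  have hq2 : 0 ≤ x + y - z := tri z x y hx hy (by linarith [hp2])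
  linarith [mul_nonneg hp0 hq0, mul_nonneg hp0 hq1, mul_nonneg hp0 hq2,
    mul_nonneg hp1 hq0, mul_nonneg hp1 hq1, mul_nonneg hp1 hq2,
    mul_nonneg hp2 hq0, mul_nonneg hp2 hq1, mul_nonneg hp2 hq2,
    mul_nonneg hq0 (sq_nonneg (x - y)), mul_nonneg hq0 (sq_nonneg (x - z)),
    mul_nonneg hq0 (sq_nonneg (y - z)), mul_nonneg hq1 (sq_nonneg (x - y)),
    mul_nonneg hq1 (sq_nonneg (x - z)), mul_nonneg hq1 (sq_nonneg (y - z)),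
    mul_nonneg hq2 (sq_nonneg (x - y)), mul_nonneg hq2 (sq_nonneg (x - z)),
    mul_nonneg hq2 (sq_nonneg (y - z))]

private lemma quadForm (x y z e1 e2 e3 u0 u1 u2 : ℝ)
    (hx : 0 < x) (hy : 0 < y) (hz : 0 < z)
    (hE1 : e1 ≤ 0) (hE2 : e2 ≤ 0) (hE3 : e3 ≤ 0)
    (hR1 : 0 ≤ 4*x*(y + z) + e3*(z + x) + e2*(x + y))
    (hR2 : 0 ≤ 4*y*(z + x) + e3*(y + z) + e1*(x + y))
    (hR3 : 0 ≤ 4*z*(x + y) + e2*(y + z) + e1*(z + x)) :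
    0 ≤ 4*x*u0^2 + 4*y*u1^2 + 4*z*u2^2 + 2*e3*u0*u1 + 2*e2*u0*u2 + 2*e1*u1*u2 := by
  have ht0 : 0 ≤ (-e3) * ((x + y) * ((z + x)*u0 - (y + z)*u1)^2) :=
    mul_nonneg (by linarith) (mul_nonneg (by linarith) (sq_nonneg _))
  have ht1 : 0 ≤ (-e2) * ((z + x) * ((x + y)*u0 - (y + z)*u2)^2) :=
    mul_nonneg (by linarith) (mul_nonneg (by linarith) (sq_nonneg _))
  have ht2 : 0 ≤ (-e1) * ((y + z) * ((x + y)*u1 - (z + x)*u2)^2) :=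
    mul_nonneg (by linarith) (mul_nonneg (by linarith) (sq_nonneg _))
  have ht3 : 0 ≤ (4*x*(y + z) + e3*(z + x) + e2*(x + y)) * ((z + x) * ((x + y) * u0^2)) :=
    mul_nonneg hR1 (mul_nonneg (by linarith) (mul_nonneg (by linarith) (sq_nonneg _)))
  have ht4 : 0 ≤ (4*y*(z + x) + e3*(y + z) + e1*(x + y)) * ((y + z) * ((x + y) * u1^2)) :=
    mul_nonneg hR2 (mul_nonneg (by linarith) (mul_nonneg (by linarith) (sq_nonneg _)))
  have ht5 : 0 ≤ (4*z*(x + y) + e2*(y + z) + e1*(z + x)) * ((y + z) * ((z + x) * u2^2)) :=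
    mul_nonneg hR3 (mul_nonneg (by linarith) (mul_nonneg (by linarith) (sq_nonneg _)))
  refine div_e_nonneg (c := (y + z) * ((z + x) * (x + y)))
    (mul_pos (by linarith) (mul_pos (by linarith) (by linarith)))
    (add_nonneg (add_nonneg (add_nonneg (add_nonneg (add_nonneg ht0 ht1) ht2) ht3) ht4) ht5)
    (by ring)

private lemma row1 (s : Fin 3 → ℝ)
    (hx : 0 < s 0) (hy : 0 < s 1) (hz : 0 < s 2)
    (hp0 : 0 ≤ (s 1 - s 2)^2 + 2*s 0*(s 1 + s 2) - 3*s 0^2)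
    (hp1 : 0 ≤ (s 2 - s 0)^2 + 2*s 1*(s 2 + s 0) - 3*s 1^2)
    (hp2 : 0 ≤ (s 0 - s 1)^2 + 2*s 2*(s 0 + s 1) - 3*s 2^2) :
    0 ≤ 4*s 0*(s 1 + s 2) + (-Spoly s / (2 * s 2) + min (a0 s 2) (Spoly s / (2 * s 2)))*(s 2 + s 0) + (-Spoly s / (2 * s 1) + min (a0 s 1) (Spoly s / (2 * s 1)))*(s 0 + s 1) := by
  have hx' : s 0 ≠ 0 := ne_of_gt hx
  have hy' : s 1 ≠ 0 := ne_of_gt hy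
  have hz' : s 2 ≠ 0 := ne_of_gt hz
  have i01 : (0:Fin 3) + 1 = 1 := rfl
  have i02 : (0:Fin 3) + 2 = 2 := rfl
  have i11 : (1:Fin 3) + 1 = 2 := rfl
  have i12 : (1:Fin 3) + 2 = 0 := rfl
  have i21 : (2:Fin 3) + 1 = 0 := rfl
  have i22 : (2:Fin 3) + 2 = 1 := rfl
  rcases min_cases (a0 s 2) (Spoly s / (2 * s 2)) with ⟨hv1, _⟩ | ⟨hv1, _⟩ <;>
      rcases min_cases (a0 s 1) (Spoly s / (2 * s 1)) with ⟨hv2, _⟩ | ⟨hv2, _⟩ <;>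
    rw [hv1, hv2] <;> simp only [a0, Spoly, i01, i02, i11, i12, i21, i22]
  · exact div_e_nonneg (mul_pos (show (0:ℝ) < 2*s 2 by linarith) (show (0:ℝ) < 2*s 1 by linarith))
      (show (0:ℝ) ≤ 4*(4*s 0*s 1*s 2*(s 1 + s 2) + s 1*(s 2 + s 0)*((s 0 - s 1)^2 - s 2*(s 0 + s 1)) + s 2*(s 0 + s 1)*((s 2 - s 0)^2 - s 1*(s 2 + s 0))) by linarith [bothCert (s 0) (s 1) (s 2) hp0 hp1 hp2])
      (by field_simp; ring)
  · exact div_e_nonneg (mul_pos (show (0:ℝ) < 2*s 2 by linarith) (show (0:ℝ) < 2*s 1 by linarith))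
      (show (0:ℝ) ≤ 4*s 1*(4*s 0*s 2*(s 1 + s 2) + (s 2 + s 0)*((s 0 - s 1)^2 - s 2*(s 0 + s 1))) by nlinarith [mul_nonneg hy.le (singleCert (s 0) (s 1) (s 2) hx hy hz hp0 hp1 hp2)])
      (by field_simp; ring)
  · exact div_e_nonneg (mul_pos (show (0:ℝ) < 2*s 2 by linarith) (show (0:ℝ) < 2*s 1 by linarith))
      (show (0:ℝ) ≤ 4*s 2*(4*s 0*s 1*(s 1 + s 2) + (s 0 + s 1)*((s 2 - s 0)^2 - s 1*(s 2 + s 0))) by nlinarith [mul_nonneg hz.le (singleCert (s 0) (s 2) (s 1) hx hz hy (by linarith [hp0]) (by linarith [hp2]) (by linarith [hp1]))])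
      (by field_simp; ring)
  · exact div_e_nonneg (mul_pos (show (0:ℝ) < 2*s 2 by linarith) (show (0:ℝ) < 2*s 1 by linarith))
      (show (0:ℝ) ≤ 16*s 0*s 1*s 2*(s 1 + s 2) by nlinarith [mul_pos (mul_pos (mul_pos hx hy) hz) (show (0:ℝ) < s 1 + s 2 by linarith)])
      (by field_simp; ring)

private lemma row2 (s : Fin 3 → ℝ)
    (hx : 0 < s 0) (hy : 0 < s 1) (hz : 0 < s 2)
    (hp0 : 0 ≤ (s 1 - s 2)^2 + 2*s 0*(s 1 + s 2) - 3*s 0^2)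
    (hp1 : 0 ≤ (s 2 - s 0)^2 + 2*s 1*(s 2 + s 0) - 3*s 1^2)
    (hp2 : 0 ≤ (s 0 - s 1)^2 + 2*s 2*(s 0 + s 1) - 3*s 2^2) :
    0 ≤ 4*s 1*(s 2 + s 0) + (-Spoly s / (2 * s 2) + min (a0 s 2) (Spoly s / (2 * s 2)))*(s 1 + s 2) + (-Spoly s / (2 * s 0) + min (a0 s 0) (Spoly s / (2 * s 0)))*(s 0 + s 1) := by
  have hx' : s 0 ≠ 0 := ne_of_gt hx
  have hy' : s 1 ≠ 0 := ne_of_gt hy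
  have hz' : s 2 ≠ 0 := ne_of_gt hz
  have i01 : (0:Fin 3) + 1 = 1 := rfl
  have i02 : (0:Fin 3) + 2 = 2 := rfl
  have i11 : (1:Fin 3) + 1 = 2 := rfl
  have i12 : (1:Fin 3) + 2 = 0 := rfl
  have i21 : (2:Fin 3) + 1 = 0 := rfl
  have i22 : (2:Fin 3) + 2 = 1 := rfl
  rcases min_cases (a0 s 2) (Spoly s / (2 * s 2)) with ⟨hv1, _⟩ | ⟨hv1, _⟩ <;>
      rcases min_cases (a0 s 0) (Spoly s / (2 * s 0)) with ⟨hv2, _⟩ | ⟨hv2, _⟩ <;>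
    rw [hv1, hv2] <;> simp only [a0, Spoly, i01, i02, i11, i12, i21, i22]
  · exact div_e_nonneg (mul_pos (show (0:ℝ) < 2*s 2 by linarith) (show (0:ℝ) < 2*s 0 by linarith))
      (show (0:ℝ) ≤ 4*(4*s 0*s 1*s 2*(s 2 + s 0) + s 0*(s 1 + s 2)*((s 0 - s 1)^2 - s 2*(s 0 + s 1)) + s 2*(s 0 + s 1)*((s 1 - s 2)^2 - s 0*(s 1 + s 2))) by linarith [bothCert (s 1) (s 2) (s 0) (by linarith [hp1]) (by linarith [hp2]) (by linarith [hp0])])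
      (by field_simp; ring)
  · exact div_e_nonneg (mul_pos (show (0:ℝ) < 2*s 2 by linarith) (show (0:ℝ) < 2*s 0 by linarith))
      (show (0:ℝ) ≤ 4*s 0*(4*s 1*s 2*(s 2 + s 0) + (s 1 + s 2)*((s 0 - s 1)^2 - s 2*(s 0 + s 1))) by nlinarith [mul_nonneg hx.le (singleCert (s 1) (s 2) (s 0) hy hz hx (by linarith [hp1]) (by linarith [hp2]) (by linarith [hp0]))])
      (by field_simp; ring)
  · exact div_e_nonneg (mul_pos (show (0:ℝ) < 2*s 2 by linarith) (show (0:ℝ) < 2*s 0 by linarith))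
      (show (0:ℝ) ≤ 4*s 2*(4*s 0*s 1*(s 2 + s 0) + (s 0 + s 1)*((s 1 - s 2)^2 - s 0*(s 1 + s 2))) by nlinarith [mul_nonneg hz.le (singleCert (s 1) (s 0) (s 2) hy hx hz (by linarith [hp1]) (by linarith [hp0]) (by linarith [hp2]))])
      (by field_simp; ring)
  · exact div_e_nonneg (mul_pos (show (0:ℝ) < 2*s 2 by linarith) (show (0:ℝ) < 2*s 0 by linarith))
      (show (0:ℝ) ≤ 16*s 0*s 1*s 2*(s 2 + s 0) by nlinarith [mul_pos (mul_pos (mul_pos hx hy) hz) (show (0:ℝ) < s 2 + s 0 by linarith)])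
      (by field_simp; ring)

private lemma row3 (s : Fin 3 → ℝ)
    (hx : 0 < s 0) (hy : 0 < s 1) (hz : 0 < s 2)
    (hp0 : 0 ≤ (s 1 - s 2)^2 + 2*s 0*(s 1 + s 2) - 3*s 0^2)
    (hp1 : 0 ≤ (s 2 - s 0)^2 + 2*s 1*(s 2 + s 0) - 3*s 1^2)
    (hp2 : 0 ≤ (s 0 - s 1)^2 + 2*s 2*(s 0 + s 1) - 3*s 2^2) :
    0 ≤ 4*s 2*(s 0 + s 1) + (-Spoly s / (2 * s 1) + min (a0 s 1) (Spoly s / (2 * s 1)))*(s 1 + s 2) + (-Spoly s / (2 * s 0) + min (a0 s 0) (Spoly s / (2 * s 0)))*(s 2 + s 0) := by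
  have hx' : s 0 ≠ 0 := ne_of_gt hx
  have hy' : s 1 ≠ 0 := ne_of_gt hy
  have hz' : s 2 ≠ 0 := ne_of_gt hz
  have i01 : (0:Fin 3) + 1 = 1 := rfl
  have i02 : (0:Fin 3) + 2 = 2 := rfl
  have i11 : (1:Fin 3) + 1 = 2 := rfl
  have i12 : (1:Fin 3) + 2 = 0 := rfl
  have i21 : (2:Fin 3) + 1 = 0 := rfl
  have i22 : (2:Fin 3) + 2 = 1 := rfl
  rcases min_cases (a0 s 1) (Spoly s / (2 * s 1)) with ⟨hv1, _⟩ | ⟨hv1, _⟩ <;>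
      rcases min_cases (a0 s 0) (Spoly s / (2 * s 0)) with ⟨hv2, _⟩ | ⟨hv2, _⟩ <;>
    rw [hv1, hv2] <;> simp only [a0, Spoly, i01, i02, i11, i12, i21, i22]
  · exact div_e_nonneg (mul_pos (show (0:ℝ) < 2*s 1 by linarith) (show (0:ℝ) < 2*s 0 by linarith))
      (show (0:ℝ) ≤ 4*(4*s 0*s 1*s 2*(s 0 + s 1) + s 0*(s 1 + s 2)*((s 2 - s 0)^2 - s 1*(s 2 + s 0)) + s 1*(s 2 + s 0)*((s 1 - s 2)^2 - s 0*(s 1 + s 2))) by linarith [bothCert (s 2) (s 0) (s 1) (by linarith [hp2]) (by linarith [hp0]) (by linarith [hp1])])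
      (by field_simp; ring)
  · exact div_e_nonneg (mul_pos (show (0:ℝ) < 2*s 1 by linarith) (show (0:ℝ) < 2*s 0 by linarith))
      (show (0:ℝ) ≤ 4*s 0*(4*s 1*s 2*(s 0 + s 1) + (s 1 + s 2)*((s 2 - s 0)^2 - s 1*(s 2 + s 0))) by nlinarith [mul_nonneg hx.le (singleCert (s 2) (s 0) (s 1) hz hx hy (by linarith [hp2]) (by linarith [hp0]) (by linarith [hp1]))])
      (by field_simp; ring)
  · exact div_e_nonneg (mul_pos (show (0:ℝ) < 2*s 1 by linarith) (show (0:ℝ) < 2*s 0 by linarith))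
      (show (0:ℝ) ≤ 4*s 1*(4*s 0*s 2*(s 0 + s 1) + (s 2 + s 0)*((s 1 - s 2)^2 - s 0*(s 1 + s 2))) by nlinarith [mul_nonneg hy.le (singleCert (s 2) (s 1) (s 0) hz hy hx (by linarith [hp2]) (by linarith [hp1]) (by linarith [hp0]))])
      (by field_simp; ring)
  · exact div_e_nonneg (mul_pos (show (0:ℝ) < 2*s 1 by linarith) (show (0:ℝ) < 2*s 0 by linarith))
      (show (0:ℝ) ≤ 16*s 0*s 1*s 2*(s 0 + s 1) by nlinarith [mul_pos (mul_pos (mul_pos hx hy) hz) (show (0:ℝ) < s 0 + s 1 by linarith)])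
      (by field_simp; ring)

private lemma cond0 (s : Fin 3 → ℝ)
    (hx : 0 < s 0) (hy : 0 < s 1) (hz : 0 < s 2)
    (hp0 : 0 ≤ (s 1 - s 2)^2 + 2*s 0*(s 1 + s 2) - 3*s 0^2)
    (hp1 : 0 ≤ (s 2 - s 0)^2 + 2*s 1*(s 2 + s 0) - 3*s 1^2)
    (hp2 : 0 ≤ (s 0 - s 1)^2 + 2*s 2*(s 0 + s 1) - 3*s 2^2) :
    0 ≤ s 1 + s 2 - s 0 + min (a0 s 0) (Spoly s / (2 * s 0)) := by
  have hx' : s 0 ≠ 0 := ne_of_gt hx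
  have hy' : s 1 ≠ 0 := ne_of_gt hy
  have hz' : s 2 ≠ 0 := ne_of_gt hz
  have hq0 : 0 ≤ s 1 + s 2 - s 0 := tri (s 0) (s 1) (s 2) hy hz hp0
  have hq1 : 0 ≤ s 2 + s 0 - s 1 := tri (s 1) (s 2) (s 0) hz hx (by linarith [hp1])
  have hq2 : 0 ≤ s 0 + s 1 - s 2 := tri (s 2) (s 0) (s 1) hx hy (by linarith [hp2])
  have i01 : (0:Fin 3) + 1 = 1 := rfl
  have i02 : (0:Fin 3) + 2 = 2 := rfl
  have i11 : (1:Fin 3) + 1 = 2 := rfl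
  have i12 : (1:Fin 3) + 2 = 0 := rfl
  have i21 : (2:Fin 3) + 1 = 0 := rfl
  have i22 : (2:Fin 3) + 2 = 1 := rfl
  rcases min_cases (a0 s 0) (Spoly s / (2 * s 0)) with ⟨hv, _⟩ | ⟨hv, _⟩ <;>
    rw [hv] <;> simp only [a0, Spoly, i01, i02, i11, i12, i21, i22]
  · exact div_e_nonneg (show (0:ℝ) < 2 * s 0 by linarith)
      hp0 (by field_simp; ring)
  · exact div_e_nonneg (show (0:ℝ) < 2 * s 0 by linarith)
      (show (0:ℝ) ≤ ((s 1 - s 2)^2 + 2*s 0*(s 1 + s 2) - 3*s 0^2) + 2*(s 1*(s 2 + s 0 - s 1) + s 2*(s 0 + s 1 - s 2)) by nlinarith [hp0, mul_nonneg hy.le hq1, mul_nonneg hz.le hq2])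
      (by field_simp; ring)

private lemma cond1 (s : Fin 3 → ℝ)
    (hx : 0 < s 0) (hy : 0 < s 1) (hz : 0 < s 2)
    (hp0 : 0 ≤ (s 1 - s 2)^2 + 2*s 0*(s 1 + s 2) - 3*s 0^2)
    (hp1 : 0 ≤ (s 2 - s 0)^2 + 2*s 1*(s 2 + s 0) - 3*s 1^2)
    (hp2 : 0 ≤ (s 0 - s 1)^2 + 2*s 2*(s 0 + s 1) - 3*s 2^2) :
    0 ≤ s 2 + s 0 - s 1 + min (a0 s 1) (Spoly s / (2 * s 1)) := by
  have hx' : s 0 ≠ 0 := ne_of_gt hx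
  have hy' : s 1 ≠ 0 := ne_of_gt hy
  have hz' : s 2 ≠ 0 := ne_of_gt hz
  have hq0 : 0 ≤ s 1 + s 2 - s 0 := tri (s 0) (s 1) (s 2) hy hz hp0
  have hq1 : 0 ≤ s 2 + s 0 - s 1 := tri (s 1) (s 2) (s 0) hz hx (by linarith [hp1])
  have hq2 : 0 ≤ s 0 + s 1 - s 2 := tri (s 2) (s 0) (s 1) hx hy (by linarith [hp2])
  have i01 : (0:Fin 3) + 1 = 1 := rfl
  have i02 : (0:Fin 3) + 2 = 2 := rfl
  have i11 : (1:Fin 3) + 1 = 2 := rfl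
  have i12 : (1:Fin 3) + 2 = 0 := rfl
  have i21 : (2:Fin 3) + 1 = 0 := rfl
  have i22 : (2:Fin 3) + 2 = 1 := rfl
  rcases min_cases (a0 s 1) (Spoly s / (2 * s 1)) with ⟨hv, _⟩ | ⟨hv, _⟩ <;>
    rw [hv] <;> simp only [a0, Spoly, i01, i02, i11, i12, i21, i22]
  · exact div_e_nonneg (show (0:ℝ) < 2 * s 1 by linarith)
      hp1 (by field_simp; ring)
  · exact div_e_nonneg (show (0:ℝ) < 2 * s 1 by linarith)
      (show (0:ℝ) ≤ ((s 2 - s 0)^2 + 2*s 1*(s 2 + s 0) - 3*s 1^2) + 2*(s 2*(s 0 + s 1 - s 2) + s 0*(s 1 + s 2 - s 0)) by nlinarith [hp1, mul_nonneg hz.le hq2, mul_nonneg hx.le hq0])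
      (by field_simp; ring)

private lemma cond2 (s : Fin 3 → ℝ)
    (hx : 0 < s 0) (hy : 0 < s 1) (hz : 0 < s 2)
    (hp0 : 0 ≤ (s 1 - s 2)^2 + 2*s 0*(s 1 + s 2) - 3*s 0^2)
    (hp1 : 0 ≤ (s 2 - s 0)^2 + 2*s 1*(s 2 + s 0) - 3*s 1^2)
    (hp2 : 0 ≤ (s 0 - s 1)^2 + 2*s 2*(s 0 + s 1) - 3*s 2^2) :
    0 ≤ s 0 + s 1 - s 2 + min (a0 s 2) (Spoly s / (2 * s 2)) := by
  have hx' : s 0 ≠ 0 := ne_of_gt hx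
  have hy' : s 1 ≠ 0 := ne_of_gt hy
  have hz' : s 2 ≠ 0 := ne_of_gt hz
  have hq0 : 0 ≤ s 1 + s 2 - s 0 := tri (s 0) (s 1) (s 2) hy hz hp0
  have hq1 : 0 ≤ s 2 + s 0 - s 1 := tri (s 1) (s 2) (s 0) hz hx (by linarith [hp1])
  have hq2 : 0 ≤ s 0 + s 1 - s 2 := tri (s 2) (s 0) (s 1) hx hy (by linarith [hp2])
  have i01 : (0:Fin 3) + 1 = 1 := rfl
  have i02 : (0:Fin 3) + 2 = 2 := rfl
  have i11 : (1:Fin 3) + 1 = 2 := rfl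
  have i12 : (1:Fin 3) + 2 = 0 := rfl
  have i21 : (2:Fin 3) + 1 = 0 := rfl
  have i22 : (2:Fin 3) + 2 = 1 := rfl
  rcases min_cases (a0 s 2) (Spoly s / (2 * s 2)) with ⟨hv, _⟩ | ⟨hv, _⟩ <;>
    rw [hv] <;> simp only [a0, Spoly, i01, i02, i11, i12, i21, i22]
  · exact div_e_nonneg (show (0:ℝ) < 2 * s 2 by linarith)
      hp2 (by field_simp; ring)
  · exact div_e_nonneg (show (0:ℝ) < 2 * s 2 by linarith)
      (show (0:ℝ) ≤ ((s 0 - s 1)^2 + 2*s 2*(s 0 + s 1) - 3*s 2^2) + 2*(s 0*(s 1 + s 2 - s 0) + s 1*(s 2 + s 0 - s 1)) by nlinarith [hp2, mul_nonneg hx.le hq0, mul_nonneg hy.le hq1])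
      (by field_simp; ring)

/-- Matrix-level statement: `g_s` on `W⁶` has strongly nonnegative curvature iff it
has `sec ≥ 0`. -/
theorem stronglyNonneg_W6_iff (s : Fin 3 → ℝ) (hs : ∀ r, 0 < s r) :
    (∀ r, 0 ≤ ppoly s r) ↔
      ∃ a : Fin 3 → ℝ, (M6 s a).PosSemidef ∧
        (∀ r, 0 ≤ s (r + 1) + s (r + 2) - s r + a r) ∧
        (∀ r, a r ≤ a0 s r) := by
  have hx := hs 0
  have hy := hs 1
  have hz := hs 2
  constructor
  · intro hp
    have hp0 : 0 ≤ (s 1 - s 2)^2 + 2*s 0*(s 1 + s 2) - 3*s 0^2 := hp 0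
    have hp1 : 0 ≤ (s 2 - s 0)^2 + 2*s 1*(s 2 + s 0) - 3*s 1^2 := hp 1
    have hp2 : 0 ≤ (s 0 - s 1)^2 + 2*s 2*(s 0 + s 1) - 3*s 2^2 := hp 2
    have hR1 := row1 s hx hy hz hp0 hp1 hp2
    have hR2 := row2 s hx hy hz hp0 hp1 hp2
    have hR3 := row3 s hx hy hz hp0 hp1 hp2
    have hE1 : (-Spoly s / (2 * s 0) + min (a0 s 0) (Spoly s / (2 * s 0))) ≤ 0 := by
      have h := add_le_add_left (min_le_right (a0 s 0) (Spoly s / (2 * s 0))) (-Spoly s / (2 * s 0))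
      simpa [neg_div] using h
    have hE2 : (-Spoly s / (2 * s 1) + min (a0 s 1) (Spoly s / (2 * s 1))) ≤ 0 := by
      have h := add_le_add_left (min_le_right (a0 s 1) (Spoly s / (2 * s 1))) (-Spoly s / (2 * s 1))
      simpa [neg_div] using h
    have hE3 : (-Spoly s / (2 * s 2) + min (a0 s 2) (Spoly s / (2 * s 2))) ≤ 0 := by
      have h := add_le_add_left (min_le_right (a0 s 2) (Spoly s / (2 * s 2))) (-Spoly s / (2 * s 2))
      simpa [neg_div] using h
    refine ⟨fun r => min (a0 s r) (Spoly s / (2 * s r)), PosSemidef.of_dotProduct_mulVec_nonneg ?_ ?_, ?_, ?_⟩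
    · ext i j
      fin_cases i <;> fin_cases j <;> simp [M6, Matrix.conjTranspose_apply]
    · intro v
      have key := quadForm (s 0) (s 1) (s 2)
        (-Spoly s / (2 * s 0) + min (a0 s 0) (Spoly s / (2 * s 0))) (-Spoly s / (2 * s 1) + min (a0 s 1) (Spoly s / (2 * s 1))) (-Spoly s / (2 * s 2) + min (a0 s 2) (Spoly s / (2 * s 2)))
        (v 0) (v 1) (v 2) hx hy hz hE1 hE2 hE3 hR1 hR2 hR3
      simp [M6, dotProduct, Matrix.mulVec, Fin.sum_univ_three]
      ring_nf
      ring_nf at key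
      linarith [key]
    · intro r
      fin_cases r
      · exact cond0 s hx hy hz hp0 hp1 hp2
      · exact cond1 s hx hy hz hp0 hp1 hp2
      · exact cond2 s hx hy hz hp0 hp1 hp2
    · intro r
      exact min_le_left _ _
  · rintro ⟨a, -, h2, h3⟩ r
    have h4 : 0 ≤ s (r + 1) + s (r + 2) - s r + a0 s r := by
      have := h2 r
      have := h3 r
      linarith
    have key : ppoly s r = (s (r + 1) + s (r + 2) - s r + a0 s r) * (2 * s r) := by
      have hr : s r ≠ 0 := ne_of_gt (hs r)
      simp only [ppoly, a0]
      field_simp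
      ring
    rw [key]
    exact mul_nonneg h4 (by linarith [hs r])
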